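/- (Convergence of EAPM, the extrapolated alternating projection method.) Let S₁ ⊆ ℝ^N be a nonempty closed affine subspace and S₂ ⊆ ℝ^N a nonempty closed convex set with S₁ ∩ S₂ ≠ ∅, and let P₁, P₂ denote the metric projections onto S₁ and S₂. Fix ρ with 0 < ρ < 2, let x⁽⁰⁾ ∈ S₁, and define for all n ∈ ℕ: x⁽ⁿ⁺¹⁾ = x⁽ⁿ⁾ + ρ Kₙ (P₁ P₂ x⁽ⁿ⁾ − x⁽ⁿ⁾), where Kₙ = ‖P₂ x⁽ⁿ⁾ − x⁽ⁿ⁾‖² / ‖P₁ P₂ x⁽ⁿ⁾ − x⁽ⁿ⁾‖² if x⁽ⁿ⁾ ∉ S₂, and Kₙ = 1 if x⁽ⁿ⁾ ∈ S₂. Assume that for every n with x⁽ⁿ⁾ ∉ S₂ one has P₁ P₂ x⁽ⁿ⁾ ≠ x⁽ⁿ⁾ (so Kₙ is well defined). Then the sequence (x⁽ⁿ⁾) converges to a point of S₁ ∩ S₂. -/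

import Mathlib

open RealInnerProductSpace Filter Topology

lemma proj_inner_le {E : Type*} [NormedAddCommGroup E] [InnerProductSpace ℝ E]
    {C : Set E} (hC : Convex ℝ C) {P : E → E}
    (hP : ∀ x, P x ∈ C ∧ ∀ y ∈ C, dist x (P x) ≤ dist x y) (x : E) :
    ∀ w ∈ C, ⟪x - P x, w - P x⟫ ≤ (0:ℝ) := by
  haveI : Nonempty C := ⟨⟨P x, (hP x).1⟩⟩
  have h1 : ‖x - P x‖ = ⨅ w : C, ‖x - w‖ := by
    refine le_antisymm (le_ciInf fun w => ?_)
      (ciInf_le (f := fun w : C => ‖x - (w : E)‖) ⟨(0:ℝ), by rintro _ ⟨w, rfl⟩; exact norm_nonneg _⟩ ⟨P x, (hP x).1⟩)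
    simpa [dist_eq_norm] using (hP x).2 w w.2
  exact (norm_eq_iInf_iff_real_inner_le_zero hC (hP x).1).mp h1


/-- Convergence of EAPM (extrapolated alternating projection method): with `S₁` a nonempty
closed affine subspace, `S₂` nonempty closed convex, `S₁ ∩ S₂ ≠ ∅`, `0 < ρ < 2`,
`x⁽⁰⁾ ∈ S₁`, and `x⁽ⁿ⁺¹⁾ = x⁽ⁿ⁾ + ρ Kₙ (P₁ P₂ x⁽ⁿ⁾ − x⁽ⁿ⁾)` with the extrapolation
factor `Kₙ` as specified, the sequence `(x⁽ⁿ⁾)` converges to a point of `S₁ ∩ S₂`. -/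
theorem stmt_7 (N : ℕ) (W : AffineSubspace ℝ (EuclideanSpace ℝ (Fin N)))
    (S₁ S₂ : Set (EuclideanSpace ℝ (Fin N)))
    (hS₁W : S₁ = (W : Set (EuclideanSpace ℝ (Fin N))))
    (h₁c : IsClosed S₁) (h₁n : S₁.Nonempty)
    (h₂c : IsClosed S₂) (h₂v : Convex ℝ S₂) (h₂n : S₂.Nonempty)
    (hI : (S₁ ∩ S₂).Nonempty)
    (P₁ P₂ : EuclideanSpace ℝ (Fin N) → EuclideanSpace ℝ (Fin N))
    (hP₁ : ∀ x, P₁ x ∈ S₁ ∧ ∀ y ∈ S₁, dist x (P₁ x) ≤ dist x y)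
    (hP₂ : ∀ x, P₂ x ∈ S₂ ∧ ∀ y ∈ S₂, dist x (P₂ x) ≤ dist x y)
    (ρ : ℝ) (hρ₀ : 0 < ρ) (hρ₂ : ρ < 2)
    (x : ℕ → EuclideanSpace ℝ (Fin N)) (K : ℕ → ℝ)
    (hx0 : x 0 ∈ S₁)
    (hKin : ∀ n : ℕ, x n ∈ S₂ → K n = 1)
    (hKout : ∀ n : ℕ, x n ∉ S₂ →
      K n = ‖P₂ (x n) - x n‖ ^ 2 / ‖P₁ (P₂ (x n)) - x n‖ ^ 2)
    (hwd : ∀ n : ℕ, x n ∉ S₂ → P₁ (P₂ (x n)) ≠ x n)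
    (hrec : ∀ n : ℕ, x (n + 1) = x n + (ρ * K n) • (P₁ (P₂ (x n)) - x n)) :
    ∃ z ∈ S₁ ∩ S₂, Filter.Tendsto x Filter.atTop (nhds z) := by
  classical
  have hP₂mem : ∀ v, P₂ v ∈ S₂ := fun v => (hP₂ v).1
  have hP₁mem : ∀ v, P₁ v ∈ S₁ := fun v => (hP₁ v).1
  have h₁v : Convex ℝ S₁ := hS₁W ▸ W.convex
  have hproj₂ : ∀ v, ∀ w ∈ S₂, ⟪v - P₂ v, w - P₂ v⟫ ≤ (0:ℝ) := proj_inner_le h₂v hP₂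
  have hproj₁le : ∀ v, ∀ w ∈ S₁, ⟪v - P₁ v, w - P₁ v⟫ ≤ (0:ℝ) := proj_inner_le h₁v hP₁
  have hrefl : ∀ a ∈ S₁, ∀ b ∈ S₁, a + (a - b) ∈ S₁ := by
    intro a ha b hb
    rw [hS₁W] at ha hb ⊢
    have := W.smul_vsub_vadd_mem 1 ha hb ha
    simpa [vsub_eq_sub, vadd_eq_add, add_comm] using this
  have hproj₁ : ∀ v, ∀ w ∈ S₁, ⟪v - P₁ v, w - P₁ v⟫ = (0:ℝ) := by
    intro v w hw
    have h1 := hproj₁le v w hw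
    have h2 := hproj₁le v (P₁ v + (P₁ v - w)) (hrefl _ (hP₁mem v) _ hw)
    have h3 : (P₁ v + (P₁ v - w)) - P₁ v = -(w - P₁ v) := by abel
    rw [h3, inner_neg_right] at h2
    linarith
  have hfix₂ : ∀ v ∈ S₂, P₂ v = v := by
    intro v hv
    have h := (hP₂ v).2 v hv
    rw [dist_self] at h
    exact (dist_le_zero.mp h).symm
  have hfix₁ : ∀ v ∈ S₁, P₁ v = v := by
    intro v hv
    have h := (hP₁ v).2 v hv
    rw [dist_self] at h
    exact (dist_le_zero.mp h).symm
  have hmem : ∀ n, x n ∈ S₁ := by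
    intro n
    induction n with
    | zero => exact hx0
    | succ n ih =>
      rw [hrec n, hS₁W]
      have h1 : P₁ (P₂ (x n)) ∈ W := by
        have := hP₁mem (P₂ (x n)); rwa [hS₁W] at this
      have h2 : x n ∈ W := by rwa [hS₁W] at ih
      have := W.smul_vsub_vadd_mem (ρ * K n) h1 h2 h2
      simpa [vsub_eq_sub, vadd_eq_add, add_comm] using this
  -- core Fejér inequality
  have key : ∀ n, ∀ z ∈ S₁, z ∈ S₂ →
      ‖x (n+1) - z‖^2 + ρ*(2-ρ)*‖P₂ (x n) - x n‖^2 ≤ ‖x n - z‖^2 := by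
    intro n z hz₁ hz₂
    by_cases hcs : x n ∈ S₂
    · have hy : P₂ (x n) = x n := hfix₂ _ hcs
      have hw : P₁ (x n) = x n := hfix₁ _ (hmem n)
      have hx1 : x (n+1) = x n := by rw [hrec n, hy, hw]; simp
      rw [hx1, hy]
      simp
    · set a := x n with ha
      set y := P₂ a with hy
      set w := P₁ y with hw
      have hane : y ≠ a := fun h => hcs (h ▸ hP₂mem a)
      have hY : (0:ℝ) < ‖y - a‖^2 :=
        pow_pos (norm_pos_iff.mpr (sub_ne_zero.mpr hane)) 2
      have hdne : w - a ≠ 0 := sub_ne_zero.mpr (hwd n hcs)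
      have hD : (0:ℝ) < ‖w - a‖^2 := pow_pos (norm_pos_iff.mpr hdne) 2
      have hKval : K n = ‖y - a‖^2 / ‖w - a‖^2 := hKout n hcs
      have o1 : ⟪y - w, z - w⟫ = (0:ℝ) := hproj₁ y z hz₁
      have o2 : ⟪y - w, a - w⟫ = (0:ℝ) := hproj₁ y a (hmem n)
      have o3 : ⟪a - y, z - y⟫ ≤ (0:ℝ) := hproj₂ a z hz₂
      have e2 : ⟪z - a, y - w⟫ = (0:ℝ) := by
        rw [real_inner_comm]
        have h4 : z - a = (z - w) - (a - w) := by abel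
        rw [h4, inner_sub_right, o1, o2]
        ring
      have e3 : ‖y - a‖^2 ≤ ⟪z - a, y - a⟫ := by
        have h4 : ⟪z - a, y - a⟫ = ⟪z - y, y - a⟫ + ‖y - a‖^2 := by
          have h5 : z - a = (z - y) + (y - a) := by abel
          rw [h5, inner_add_left, real_inner_self_eq_norm_sq]
        have h6 : ⟪z - y, y - a⟫ = -⟪a - y, z - y⟫ := by
          have h7 : y - a = -(a - y) := by abel
          rw [h7, inner_neg_right, real_inner_comm]
        linarith [h4, h6.le, o3]
      have H1 : ‖y - a‖^2 ≤ ⟪z - a, w - a⟫ := by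
        have h8 : ⟪z - a, w - a⟫ = ⟪z - a, y - a⟫ - ⟪z - a, y - w⟫ := by
          rw [← inner_sub_right]
          congr 1
          abel
        rw [h8, e2]
        linarith
      have H2 : ‖w - a‖^2 ≤ ‖y - a‖^2 := by
        have hyd : y - a = (y - w) + (w - a) := by abel
        have hexp := norm_add_sq_real (y - w) (w - a)
        have o2' : ⟪y - w, w - a⟫ = (0:ℝ) := by
          have h9 : w - a = -(a - w) := by abel
          rw [h9, inner_neg_right, o2]
          ring
        rw [o2'] at hexp
        rw [hyd, hexp]
        nlinarith [sq_nonneg ‖y - w‖]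
      have hx1 : x (n+1) - z = (a - z) + (ρ * K n) • (w - a) := by
        rw [hrec n]
        abel
      have expand : ‖x (n+1) - z‖^2
          = ‖a - z‖^2 + 2*((ρ * K n) * ⟪a - z, w - a⟫) + (ρ * K n)^2 * ‖w - a‖^2 := by
        rw [hx1, norm_add_sq_real, real_inner_smul_right, norm_smul, Real.norm_eq_abs,
          mul_pow, sq_abs]
      have hiz : ⟪a - z, w - a⟫ = -⟪z - a, w - a⟫ := by
        have h10 : a - z = -(z - a) := by abel
        rw [h10, inner_neg_left]
      have hKD : K n * ‖w - a‖^2 = ‖y - a‖^2 := by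
        rw [hKval]
        field_simp
      have hK1 : 1 ≤ K n := by
        rw [hKval, le_div_iff₀ hD]
        linarith
      have hK0 : (0:ℝ) < K n := lt_of_lt_of_le one_pos hK1
      have ht : (0:ℝ) < ρ * K n := mul_pos hρ₀ hK0
      have h11 : (ρ * K n) * ‖y - a‖^2 ≤ (ρ * K n) * ⟪z - a, w - a⟫ :=
        mul_le_mul_of_nonneg_left H1 ht.le
      have h12 : (ρ * K n)^2 * ‖w - a‖^2 = ρ^2 * (K n * ‖y - a‖^2) := by
        rw [← hKD]; ring
      have h13 : (0:ℝ) ≤ ρ * ‖y - a‖^2 * ((K n - 1) * (2 - ρ)) :=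
        mul_nonneg (mul_nonneg hρ₀.le hY.le)
          (mul_nonneg (by linarith) (by linarith))
      rw [expand, hiz, h12]
      linarith [h11, h13]
  obtain ⟨z₀, hz₀⟩ := hI
  have hc : (0:ℝ) < ρ * (2 - ρ) := mul_pos hρ₀ (by linarith)
  have mono : ∀ z ∈ S₁, z ∈ S₂ → Antitone fun n => ‖x n - z‖^2 := by
    intro z hz1 hz2
    refine antitone_nat_of_succ_le fun n => ?_
    have h := key n z hz1 hz2
    have h' := mul_nonneg hc.le (sq_nonneg ‖P₂ (x n) - x n‖)
    linarith
  -- boundedness and convergent subsequence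
  have hbd : ∀ n, x n ∈ Metric.closedBall z₀ ‖x 0 - z₀‖ := by
    intro n
    have h : ‖x n - z₀‖^2 ≤ ‖x 0 - z₀‖^2 := mono z₀ hz₀.1 hz₀.2 (Nat.zero_le n)
    rw [Metric.mem_closedBall, dist_eq_norm]
    nlinarith [h, norm_nonneg (x n - z₀), norm_nonneg (x 0 - z₀)]
  obtain ⟨p, hpball, φ, hφ, hconv⟩ :=
    (isCompact_closedBall z₀ ‖x 0 - z₀‖).tendsto_subseq hbd
  have hpS₁ : p ∈ S₁ :=
    h₁c.mem_of_tendsto hconv (Filter.Eventually.of_forall fun k => hmem (φ k))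
  -- distance to S₂ tends to 0
  have hdist : Tendsto (fun n => ‖P₂ (x n) - x n‖^2) atTop (𝓝 0) := by
    have hA : Antitone (fun n => ‖x n - z₀‖^2) := mono z₀ hz₀.1 hz₀.2
    have hB : BddBelow (Set.range fun n => ‖x n - z₀‖^2) :=
      ⟨0, by rintro _ ⟨n, rfl⟩; positivity⟩
    have hf := tendsto_atTop_ciInf hA hB
    have hs := hf.comp (Filter.tendsto_add_atTop_nat 1)
    have hdiff : Tendsto (fun n => ‖x n - z₀‖^2 - ‖x (n+1) - z₀‖^2) atTop (𝓝 0) := by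
      simpa using hf.sub hs
    have hlim : Tendsto (fun n => (‖x n - z₀‖^2 - ‖x (n+1) - z₀‖^2) / (ρ * (2 - ρ)))
        atTop (𝓝 0) := by
      simpa using hdiff.div_const (ρ * (2 - ρ))
    refine squeeze_zero (fun n => by positivity) (fun n => ?_) hlim
    rw [le_div_iff₀ hc]
    have h := key n z₀ hz₀.1 hz₀.2
    linarith
  have hnφ : Tendsto (fun k => ‖P₂ (x (φ k)) - x (φ k)‖) atTop (𝓝 0) := by
    have h := (hdist.comp hφ.tendsto_atTop).sqrt
    have he : (fun k => Real.sqrt (‖P₂ (x (φ k)) - x (φ k)‖^2))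
        = fun k => ‖P₂ (x (φ k)) - x (φ k)‖ := funext fun k => Real.sqrt_sq (norm_nonneg _)
    simpa [he, Real.sqrt_zero] using h
  have hvφ : Tendsto (fun k => P₂ (x (φ k)) - x (φ k)) atTop (𝓝 0) :=
    tendsto_zero_iff_norm_tendsto_zero.mpr hnφ
  have h2 : Tendsto (fun k => P₂ (x (φ k))) atTop (𝓝 p) := by
    have h := hconv.add hvφ
    simpa using h
  have hpS₂ : p ∈ S₂ :=
    h₂c.mem_of_tendsto h2 (Filter.Eventually.of_forall fun k => hP₂mem _)
  -- conclude convergence of the whole sequence to p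
  have hA : Antitone (fun n => ‖x n - p‖^2) := mono p hpS₁ hpS₂
  have hB : BddBelow (Set.range fun n => ‖x n - p‖^2) :=
    ⟨0, by rintro _ ⟨n, rfl⟩; positivity⟩
  have hf := tendsto_atTop_ciInf hA hB
  have hfφ := hf.comp hφ.tendsto_atTop
  have h0 : Tendsto (fun k => ‖x (φ k) - p‖^2) atTop (𝓝 0) := by
    have hsub : Tendsto (fun k => x (φ k) - p) atTop (𝓝 (0 : EuclideanSpace ℝ (Fin N))) :=
      tendsto_sub_nhds_zero_iff.mpr hconv
    have hn := hsub.norm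
    rw [norm_zero] at hn
    simpa using hn.pow 2
  have hL : (⨅ n, ‖x n - p‖^2) = 0 := tendsto_nhds_unique hfφ h0
  rw [hL] at hf
  have hnorm : Tendsto (fun n => ‖x n - p‖) atTop (𝓝 0) := by
    have h := hf.sqrt
    have he : (fun n => Real.sqrt (‖x n - p‖^2)) = fun n => ‖x n - p‖ :=
      funext fun n => Real.sqrt_sq (norm_nonneg _)
    simpa [he, Real.sqrt_zero] using h
  exact ⟨p, ⟨hpS₁, hpS₂⟩, tendsto_iff_norm_sub_tendsto_zero.mpr hnorm⟩
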